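/- Let (Ω,𝓕,P) be a nonatomic probability space and M = {x ∈ L⁰(𝓕) : there exists a real number m_x > 0 such that x > m_x a.e.}. Then: (1) Ĩ_A·0 ∉ Ĩ_A·M for every A ∈ 𝓕 with P(A) > 0, i.e., there is no y ∈ M with Ĩ_A y = 0; but (2) for every subset U of L⁰(𝓕) which is L⁰-convex, L⁰-absorbent, L⁰-balanced, and contains U(ε) = {ξ ∈ L⁰(𝓕) : |ξ| ≤ ε} for some ε ∈ L⁰₊₊(𝓕), there exists A_U ∈ 𝓕 with P(A_U) > 0 such that Ĩ_{A_U}·U ∩ Ĩ_{A_U}·(M+U) ≠ ∅. (This disproves Lemma 2.28 of Filipović–Kupper–Vogelpoth, which asserts that 0 can be strictly separated from M+U by indicator multiplication for all such neighborhoods U.) -/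

import Mathlib

open MeasureTheory Filter Classical

/-- The set `M = {x ∈ L⁰(𝓕) : x > m_x a.e. for some real m_x > 0}`. -/
def Mset {Ω : Type*} [MeasurableSpace Ω] (P : Measure Ω) : Set (Ω →ₘ[P] ℝ) :=
  {x | ∃ m : ℝ, 0 < m ∧ ∀ᵐ ω ∂P, m < x ω}

/-- `Ĩ_A`, the equivalence class in `L⁰(𝓕,ℝ)` of the indicator function of a measurable set
`A` (junk value `0` if `A` is not measurable). -/
noncomputable def ind {Ω : Type*} [MeasurableSpace Ω] (P : Measure Ω) (A : Set Ω) :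
    Ω →ₘ[P] ℝ :=
  if h : MeasurableSet A then
    AEEqFun.mk (A.indicator fun _ => (1 : ℝ))
      ((measurable_const.indicator h).aestronglyMeasurable)
  else 0

lemma ind_coe {Ω : Type*} [MeasurableSpace Ω] (P : Measure Ω) {A : Set Ω}
    (h : MeasurableSet A) :
    (ind P A : Ω →ₘ[P] ℝ) =ᵐ[P] A.indicator (fun _ => (1 : ℝ)) := by
  rw [ind, dif_pos h]
  exact AEEqFun.coeFn_mk _ _

/-- Over a nonatomic probability space, with
`M = {x ∈ L⁰(𝓕) : ∃ m_x > 0, x > m_x a.e.}`: (1) `Ĩ_A·0 ∉ Ĩ_A·M` for every `A ∈ 𝓕` with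
`P(A) > 0`; but (2) for every `L⁰`-convex, `L⁰`-absorbent, `L⁰`-balanced `U ⊆ L⁰(𝓕)`
containing some ball `U(ε)`, `ε ∈ L⁰₊₊(𝓕)`, there is `A_U ∈ 𝓕` with `P(A_U) > 0` and
`Ĩ_{A_U}·U ∩ Ĩ_{A_U}·(M+U) ≠ ∅`.  (A counterexample to Lemma 2.28 of
Filipović–Kupper–Vogelpoth.) -/
theorem stmt9
    {Ω : Type*} [MeasurableSpace Ω] {P : Measure Ω} [IsProbabilityMeasure P]
    -- `(Ω,𝓕,P)` is nonatomic
    (hnonatomic : ∀ A : Set Ω, MeasurableSet A → 0 < P A →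
      ∃ B ⊆ A, MeasurableSet B ∧ 0 < P B ∧ P B < P A) :
    -- (1)
    (∀ A : Set Ω, MeasurableSet A → 0 < P A → ¬∃ y ∈ Mset P, ind P A * y = 0) ∧
    -- (2)
    (∀ U : Set (Ω →ₘ[P] ℝ),
      -- `U` is `L⁰`-convex
      (∀ x ∈ U, ∀ y ∈ U, ∀ ξ : Ω →ₘ[P] ℝ,
        (∀ᵐ ω ∂P, 0 ≤ ξ ω ∧ ξ ω ≤ 1) → ξ * x + (1 - ξ) * y ∈ U) →
      -- `U` is `L⁰`-absorbent
      (∀ x : Ω →ₘ[P] ℝ, ∃ ξ : Ω →ₘ[P] ℝ, (∀ᵐ ω ∂P, 0 < ξ ω) ∧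
        ∀ η : Ω →ₘ[P] ℝ, (∀ᵐ ω ∂P, |η ω| ≤ ξ ω) → η * x ∈ U) →
      -- `U` is `L⁰`-balanced
      (∀ η : Ω →ₘ[P] ℝ, (∀ᵐ ω ∂P, |η ω| ≤ 1) → ∀ u ∈ U, η * u ∈ U) →
      -- `U` contains a ball `U(ε)` for some `ε ∈ L⁰₊₊(𝓕)`
      (∃ ε : Ω →ₘ[P] ℝ, (∀ᵐ ω ∂P, 0 < ε ω) ∧
        {z : Ω →ₘ[P] ℝ | ∀ᵐ ω ∂P, |z ω| ≤ ε ω} ⊆ U) →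
      ∃ A : Set Ω, MeasurableSet A ∧ 0 < P A ∧
        ∃ u₁ ∈ U, ∃ m ∈ Mset P, ∃ u₂ ∈ U, ind P A * u₁ = ind P A * (m + u₂)) := by
  constructor
  · rintro A hA hPA ⟨y, ⟨m, hm, hy⟩, heq⟩
    have h0 := AEEqFun.coeFn_mul (ind P A) y
    rw [heq] at h0
    have hz : (fun ω => (ind P A) ω * y ω) =ᵐ[P] (0 : Ω → ℝ) :=
      h0.symm.trans (AEEqFun.coeFn_zero)
    have key : ∀ᵐ ω ∂P, ω ∉ A := by
      filter_upwards [hz, hy, ind_coe P hA] with ω h1 h2 h3 hωA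
      have : (ind P A) ω = 1 := by rw [h3, Set.indicator_of_mem hωA]
      rw [this, one_mul] at h1
      have : (0 : Ω → ℝ) ω = 0 := rfl
      rw [this] at h1
      linarith
    have : P A = 0 :=
      measure_mono_null (fun ω hω => not_not.mpr hω) (ae_iff.mp key)
    exact absurd this hPA.ne'
  · rintro U _ _ _ ⟨ε, hεpos, hεU⟩
    have hεm : Measurable (ε : Ω → ℝ) := ε.stronglyMeasurable.measurable
    have hmeas : ∀ c : ℝ, MeasurableSet {ω | c < ε ω} :=
      fun c => measurableSet_lt measurable_const hεm
    have hexists : ∃ n : ℕ, 0 < P {ω | (1 : ℝ) / (n + 1) < ε ω} := by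
      by_contra h
      push_neg at h
      have hnull : ∀ n : ℕ, P {ω | (1 : ℝ) / (n + 1) < ε ω} = 0 :=
        fun n => le_antisymm (h n) zero_le
      have hU0 : P (⋃ n : ℕ, {ω | (1 : ℝ) / (n + 1) < ε ω}) = 0 :=
        measure_iUnion_null hnull
      have hsub : {ω | 0 < ε ω} ⊆ ⋃ n : ℕ, {ω | (1 : ℝ) / (n + 1) < ε ω} := by
        intro ω hω
        have hω' : (0:ℝ) < ε ω := hω
        obtain ⟨n, hn⟩ := exists_nat_one_div_lt hω'
        exact Set.mem_iUnion.mpr ⟨n, hn⟩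
      have h1 : P {ω | 0 < ε ω} = 0 := measure_mono_null hsub hU0
      have h2 : P {ω | 0 < ε ω}ᶜ = 0 := ae_iff.mp hεpos
      have h3 := measure_add_measure_compl (μ := P) (hmeas 0)
      rw [h1, h2, measure_univ] at h3
      simp at h3
    obtain ⟨n, hn⟩ := hexists
    set c : ℝ := (1 : ℝ) / (n + 1) with hc_def
    have hc : 0 < c := by positivity
    set A : Set Ω := {ω | c < ε ω} with hA_def
    refine ⟨A, hmeas c, hn, (c / 2) • ind P A, ?_, AEEqFun.const Ω (c / 2), ?_, 0, ?_, ?_⟩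
    · apply hεU
      filter_upwards [AEEqFun.coeFn_smul (c / 2) (ind P A), ind_coe P (hmeas c), hεpos]
        with ω h1 h2 h3
      rw [h1, Pi.smul_apply, h2, smul_eq_mul]
      by_cases hω : ω ∈ A
      · rw [Set.indicator_of_mem hω]
        have : c < ε ω := hω
        rw [mul_one, abs_of_pos (by linarith)]
        linarith
      · rw [Set.indicator_of_notMem hω, mul_zero, abs_zero]
        linarith
    · refine ⟨c / 4, by positivity, ?_⟩
      filter_upwards [AEEqFun.coeFn_const (α := Ω) (μ := P) (c / 2)] with ω h1
      rw [h1]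
      show c / 4 < c / 2
      linarith
    · apply hεU
      filter_upwards [AEEqFun.coeFn_zero (α := Ω) (β := ℝ) (μ := P), hεpos] with ω h1 h2
      rw [h1]
      show |(0 : ℝ)| ≤ ε ω
      rw [abs_zero]; linarith
    · apply AEEqFun.ext
      filter_upwards [AEEqFun.coeFn_mul (ind P A) ((c / 2) • ind P A),
        AEEqFun.coeFn_mul (ind P A) (AEEqFun.const Ω (c / 2) + 0),
        AEEqFun.coeFn_smul (c / 2) (ind P A),
        AEEqFun.coeFn_add (AEEqFun.const Ω (c / 2)) (0 : Ω →ₘ[P] ℝ),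
        AEEqFun.coeFn_const (α := Ω) (μ := P) (c / 2),
        AEEqFun.coeFn_zero (α := Ω) (β := ℝ) (μ := P),
        ind_coe P (hmeas c)] with ω h1 h2 h3 h4 h5 h6 h7
      simp only [Pi.mul_apply, Pi.smul_apply, Pi.add_apply, Pi.zero_apply, smul_eq_mul,
        Function.const_apply] at h1 h2 h3 h4 h5 h6 h7 ⊢
      rw [h1, h2, h3, h7, h4, h5, h6]
      by_cases hω : ω ∈ A
      · rw [Set.indicator_of_mem hω]; ring
      · rw [Set.indicator_of_notMem hω]; ring
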